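/- The constraint-based encoding of vectors is correct: for all A : Type and n : ℕ, the type IMu (VecConstrD A) n — where VecConstrD A n offers a nil constructor carrying a proof n = 0 and a cons constructor carrying m : ℕ, a proof n = m + 1, an element of A, and a recursive position at index m — is equivalent to Vector A n (length-indexed lists). -/

import Mathlib

inductive IDesc (I : Type) : Type 1
  | var : I → IDesc I
  | unit : IDesc I
  | times : IDesc I → IDesc I → IDesc I
  | pi : (S : Type) → (S → IDesc I) → IDesc I
  | sigma : (S : Type) → (S → IDesc I) → IDesc I

def iinterp {I : Type} : IDesc I → (I → Type) → Type
  | .var i, X => X i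
  | .unit, _ => PUnit
  | .times A B, X => iinterp A X × iinterp B X
  | .pi S T, X => ∀ s : S, iinterp (T s) X
  | .sigma S T, X => Σ s : S, iinterp (T s) X

def imap {I : Type} : (D : IDesc I) → {X Y : I → Type} → (∀ i, X i → Y i) →
    iinterp D X → iinterp D Y
  | .var i, _, _, f, x => f i x
  | .unit, _, _, _, _ => PUnit.unit
  | .times A B, _, _, f, x => (imap A f x.1, imap B f x.2)
  | .pi _ T, _, _, f, g => fun s => imap (T s) f (g s)
  | .sigma _ T, _, _, f, x => ⟨x.1, imap (T x.1) f x.2⟩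

def IPos {I : Type} : (D : IDesc I) → iinterp D (fun _ => PUnit) → Type
  | .var _, _ => PUnit
  | .unit, _ => Empty
  | .times A B, x => IPos A x.1 ⊕ IPos B x.2
  | .pi S T, g => Σ s : S, IPos (T s) (g s)
  | .sigma _ T, x => IPos (T x.1) x.2

def IIdx {I : Type} : (D : IDesc I) → (s : iinterp D (fun _ => PUnit)) → IPos D s → I
  | .var i, _, _ => i
  | .times A B, x, p =>
      match p with
      | .inl p₁ => IIdx A x.1 p₁
      | .inr p₂ => IIdx B x.2 p₂
  | .pi _ T, g, p => IIdx (T p.1) (g p.1) p.2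
  | .sigma _ T, x, p => IIdx (T x.1) x.2 p

def ishapeOf {I : Type} (D : IDesc I) {X : I → Type} (x : iinterp D X) :
    iinterp D (fun _ => PUnit) :=
  imap D (fun _ _ => PUnit.unit) x

def ipayload {I : Type} : (D : IDesc I) → {X : I → Type} → (x : iinterp D X) →
    (p : IPos D (ishapeOf D x)) → X (IIdx D (ishapeOf D x) p)
  | .var _, _, x, _ => x
  | .unit, _, _, p => p.elim
  | .times A B, _, x, p =>
      match p with
      | .inl p₁ => ipayload A x.1 p₁
      | .inr p₂ => ipayload B x.2 p₂
  | .pi _ T, _, g, p => ipayload (T p.1) (g p.1) p.2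
  | .sigma _ T, _, x, p => ipayload (T x.1) x.2 p

inductive IMu {I : Type} (R : I → IDesc I) : I → Type
  | sup : ∀ (i : I) (s : iinterp (R i) (fun _ => PUnit)),
      (∀ p : IPos (R i) s, IMu R (IIdx (R i) s p)) → IMu R i

def icon {I : Type} (R : I → IDesc I) (i : I) (d : iinterp (R i) (IMu R)) : IMu R i :=
  IMu.sup i (ishapeOf (R i) d) (ipayload (R i) d)

/-- Constraint-based description of vectors: nil carries a proof `n = 0`,
cons carries `m : ℕ`, a proof `n = m + 1`, an `A`, and a recursive position at `m`. -/
def VecConstrD (A : Type) (n : ℕ) : IDesc ℕ :=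
  IDesc.sigma Bool (fun b =>
    if b then
      IDesc.sigma ℕ (fun m =>
        IDesc.sigma (PLift (n = m + 1)) (fun _ =>
          IDesc.sigma A (fun _ => IDesc.var m)))
    else
      IDesc.sigma (PLift (n = 0)) (fun _ => IDesc.unit))


section Aux
variable {A : Type}

def toVec : ∀ {n : ℕ}, IMu (VecConstrD A) n → List.Vector A n
  | _, .sup _ ⟨true, _, h, a, _⟩ f =>
      h.down ▸ List.Vector.cons a (toVec (f PUnit.unit))
  | _, .sup _ ⟨false, h, _⟩ _ => h.down ▸ List.Vector.nil

def ofVec : ∀ {n : ℕ}, List.Vector A n → IMu (VecConstrD A) n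
  | 0, _ => icon _ 0 ⟨false, ⟨rfl⟩, PUnit.unit⟩
  | n+1, v => icon _ (n+1) ⟨true, n, ⟨rfl⟩, v.head, ofVec v.tail⟩

theorem to_of : ∀ {n : ℕ} (v : List.Vector A n), toVec (ofVec v) = v
  | 0, v => by
      simp only [ofVec, icon, toVec]
      exact (List.Vector.eq_nil v).symm
  | n+1, v => by
      simp only [ofVec, icon, toVec, ipayload, to_of v.tail]
      show List.Vector.cons v.head (toVec (ofVec v.tail)) = v
      rw [to_of v.tail]
      exact List.Vector.cons_head_tail v

theorem of_to {n : ℕ} (x : IMu (VecConstrD A) n) : ofVec (toVec x) = x := by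
  induction x with
  | sup n s f ih =>
    obtain ⟨b, rest⟩ := s
    cases b with
    | true =>
      obtain ⟨m, h, a, u⟩ := rest
      cases h with | up h =>
      subst h
      cases u
      simp only [toVec, ofVec, icon]
      rw [List.Vector.head_cons, List.Vector.tail_cons]
      erw [ih PUnit.unit]
      exact congrArg (IMu.sup (m+1) _) (funext fun p => by cases p; rfl)
    | false =>
      obtain ⟨h, u⟩ := rest
      cases h with | up h =>
      subst h
      cases u
      simp only [toVec, ofVec, icon]
      congr 1
      funext p
      exact p.elim

end Aux

/-- The constraint-based encoding of vectors is correct. -/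
theorem vecConstrD_correct (A : Type) (n : ℕ) :
    Nonempty (IMu (VecConstrD A) n ≃ List.Vector A n) := by
  exact ⟨⟨toVec, ofVec, of_to, to_of⟩⟩
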